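/- Let p ∈ (1,2) and a > 0, and let f = f(·,a) be the unique solution of (|f'|^{p-2} f')' + f - |f'|^{p-1} = 0 on (0,∞) with f(0) = a, f'(0) = 0. Set R(a) := inf{r > 0 : f(r) = 0} ∈ (0,∞]. Then R(a) > 0 and, for every r ∈ (0,R(a)), one has 0 < f(r) < a and -(a(1-e^{-r}))^{1/(p-1)} < f'(r) < 0. -/

import Mathlib

open Set Filter Topology

/-- The extinction "radius" `R = inf{r > 0 : f(r) = 0}`, as an extended real number
(`⊤` when `f` does not vanish on `(0,∞)`). -/
noncomputable def extTime (f : ℝ → ℝ) : EReal :=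
  sInf {x : EReal | ∃ r : ℝ, 0 < r ∧ f r = 0 ∧ x = (r : EReal)}

/-- `f` solves `(|f'|^{p-2} f')' + f - |f'|^{p-1} = 0` on `(0,∞)` with `f(0)=a`, `f'(0)=0`;
`fd` is the derivative of `f` and `gd` the derivative of `|f'|^{p-2} f'`, both continuous
on `[0,∞)`, so that `f ∈ C¹([0,∞))` and `|f'|^{p-2} f' ∈ C¹([0,∞))`. -/
def IsSol (p a : ℝ) (f fd gd : ℝ → ℝ) : Prop :=
  (∀ r ∈ Set.Ici (0:ℝ), HasDerivWithinAt f (fd r) (Set.Ici 0) r) ∧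
  ContinuousOn fd (Set.Ici 0) ∧
  (∀ r ∈ Set.Ici (0:ℝ), HasDerivWithinAt (fun s => |fd s| ^ (p-2) * fd s) (gd r) (Set.Ici 0) r) ∧
  ContinuousOn gd (Set.Ici 0) ∧
  (∀ r ∈ Set.Ioi (0:ℝ), gd r + f r - |fd r| ^ (p-1) = 0) ∧
  f 0 = a ∧ fd 0 = 0

private lemma abs_pow_mul_self {p x : ℝ} (hp : p ≠ 1) :
    abs (|x| ^ (p-2) * x) = |x| ^ (p-1) := by
  rcases eq_or_ne x 0 with h | h
  · simp [h, Real.zero_rpow (show p - 1 ≠ 0 by intro h'; apply hp; linarith)]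
  · rw [abs_mul, abs_of_nonneg (Real.rpow_nonneg (abs_nonneg x) _),
      ← Real.rpow_add_one (abs_ne_zero.mpr h)]
    ring_nf

private lemma neg_abs_pow_of_neg {p x : ℝ} (h : x < 0) :
    |x| ^ (p-2) * x = -(|x| ^ (p-1)) := by
  have h1 : |x| ^ (p-2) * x = -(|x| ^ (p-2) * |x|) := by
    rw [abs_of_neg h]; ring
  rw [h1, ← Real.rpow_add_one (abs_ne_zero.mpr h.ne)]
  ring_nf

/-- For the solution `f(·,a)`, one has `R(a) > 0` and, for every
`r ∈ (0,R(a))`, `0 < f(r) < a` and `-(a(1-e^{-r}))^{1/(p-1)} < f'(r) < 0`. -/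
theorem stmt1 (p a : ℝ) (hp : p ∈ Set.Ioo (1:ℝ) 2) (ha : 0 < a)
    (f fd gd : ℝ → ℝ) (hf : IsSol p a f fd gd) :
    0 < extTime f ∧
    ∀ r : ℝ, 0 < r → (r : EReal) < extTime f →
      0 < f r ∧ f r < a ∧
      -((a * (1 - Real.exp (-r))) ^ (1/(p-1))) < fd r ∧ fd r < 0 := by
  obtain ⟨hp1, hp2⟩ := hp
  obtain ⟨hfderiv, hfdcont, hgderiv, hgdcont, hode, hf0, hfd0⟩ := hf
  set g : ℝ → ℝ := fun s => |fd s| ^ (p-2) * fd s with hg_def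
  have hpne : p ≠ 1 := by linarith
  have hg0 : g 0 = 0 := by simp [hg_def, hfd0]
  have hfcont : ContinuousOn f (Ici 0) := fun s hs => (hfderiv s hs).continuousWithinAt
  have hgcont : ContinuousOn g (Ici 0) := fun s hs => (hgderiv s hs).continuousWithinAt
  have habsg : ∀ s, |g s| = |fd s| ^ (p-1) := fun s => abs_pow_mul_self hpne
  have hodeg : ∀ s ∈ Ioi (0:ℝ), gd s = |g s| - f s := by
    intro s hs
    have := hode s hs
    rw [habsg s]; linarith
  -- value of gd at 0 by continuity
  have hgd0 : gd 0 = -a := by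
    have h1 : Tendsto gd (𝓝[>] (0:ℝ)) (𝓝 (gd 0)) :=
      ((hgdcont 0 self_mem_Ici).mono_left (nhdsWithin_mono _ Ioi_subset_Ici_self))
    have h2 : Tendsto (fun s => |g s| - f s) (𝓝[>] (0:ℝ)) (𝓝 (-a)) := by
      have : Tendsto (fun s => |g s| - f s) (𝓝[Ici 0] (0:ℝ)) (𝓝 (|g 0| - f 0)) :=
        ((hgcont 0 self_mem_Ici).abs.sub (hfcont 0 self_mem_Ici))
      rw [hg0, hf0] at this
      simpa using this.mono_left (nhdsWithin_mono _ Ioi_subset_Ici_self)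
    have h3 : Tendsto gd (𝓝[>] (0:ℝ)) (𝓝 (-a)) := by
      refine h2.congr' ?_
      filter_upwards [self_mem_nhdsWithin] with s hs
      exact (hodeg s hs).symm
    exact tendsto_nhds_unique h1 h3
  -- g is negative immediately to the right of 0
  have hgneg_near : ∀ᶠ s in 𝓝[>] (0:ℝ), g s < 0 := by
    have hslope : Tendsto (slope g 0) (𝓝[>] (0:ℝ)) (𝓝 (gd 0)) := by
      have := hasDerivWithinAt_iff_tendsto_slope.mp (hgderiv 0 self_mem_Ici)
      have hset : Ici (0:ℝ) \ {0} = Ioi 0 := Ici_sdiff_left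
      rwa [hset] at this
    rw [hgd0] at hslope
    have hev : ∀ᶠ s in 𝓝[>] (0:ℝ), slope g 0 s < 0 :=
      hslope.eventually_lt_const (by linarith)
    filter_upwards [hev, self_mem_nhdsWithin] with s hs hs'
    rw [slope_def_field] at hs
    have hs0 : (0:ℝ) < s := hs'
    have : (g s - g 0) / (s - 0) < 0 := by
      simpa [div_eq_inv_mul] using hs
    rw [hg0, sub_zero, sub_zero] at this
    rcases div_neg_iff.mp this with ⟨_, h2⟩ | ⟨h1, _⟩
    · linarith
    · exact h1
  -- derivatives as genuine derivatives on (0,∞)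
  have hfd' : ∀ t : ℝ, 0 < t → HasDerivAt f (fd t) t := fun t ht =>
    (hfderiv t (le_of_lt ht)).hasDerivAt (Ici_mem_nhds ht)
  have hgd' : ∀ t : ℝ, 0 < t → HasDerivAt g (gd t) t := fun t ht =>
    (hgderiv t (le_of_lt ht)).hasDerivAt (Ici_mem_nhds ht)
  -- the key lemma on intervals where f does not vanish
  have key : ∀ r : ℝ, 0 < r → (∀ s ∈ Ioc (0:ℝ) r, f s ≠ 0) →
      ∀ s ∈ Ioc (0:ℝ) r, 0 < f s ∧ f s < a ∧ g s < 0 ∧ -(a * (1 - Real.exp (-s))) < g s := by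
    intro r hr Hne
    have hIccIci : Icc (0:ℝ) r ⊆ Ici 0 := fun t ht => ht.1
    have hfcr : ContinuousOn f (Icc 0 r) := hfcont.mono hIccIci
    -- Step A : f > 0 on (0, r]
    have Hpos : ∀ s ∈ Ioc (0:ℝ) r, 0 < f s := by
      intro s hs
      by_contra hcon
      push_neg at hcon
      have h0 : (0:ℝ) ∈ Icc (f s) (f 0) := ⟨hcon, by rw [hf0]; exact ha.le⟩
      obtain ⟨t, ht, hft⟩ := intermediate_value_Icc' hs.1.le (hfcr.mono (Icc_subset_Icc_right hs.2)) h0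
      have ht0 : t ≠ 0 := by intro h; rw [h, hf0] at hft; linarith
      exact Hne t ⟨lt_of_le_of_ne ht.1 (Ne.symm ht0), le_trans ht.2 hs.2⟩ hft
    -- Step B₀ : g ≤ 0 on [0, r]
    have hnonpos : ∀ s ∈ Icc (0:ℝ) r, g s ≤ 0 := by
      by_contra hcon
      push_neg at hcon
      obtain ⟨s₁, hs₁mem, hs₁pos⟩ := hcon
      set S := {s : ℝ | s ∈ Icc 0 r ∧ 0 < g s} with hS_def
      have hSne : S.Nonempty := ⟨s₁, hs₁mem, hs₁pos⟩
      have hSbdd : BddBelow S := ⟨0, fun s hs => hs.1.1⟩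
      set s₀ := sInf S with hs₀_def
      have hs₀mem : s₀ ∈ Icc 0 r :=
        ⟨le_csInf hSne (fun s hs => hs.1.1), le_trans (csInf_le hSbdd ⟨hs₁mem, hs₁pos⟩) hs₁mem.2⟩
      have hbefore : ∀ t, 0 ≤ t → t < s₀ → g t ≤ 0 := by
        intro t ht htlt
        by_contra h
        push_neg at h
        have : t ∈ S := ⟨⟨ht, le_trans htlt.le hs₀mem.2⟩, h⟩
        exact absurd (csInf_le hSbdd this) (not_le.mpr htlt)
      have hgs₀ : 0 ≤ g s₀ := by
        have hcl : s₀ ∈ closure S := csInf_mem_closure hSne hSbdd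
        have hclosed : IsClosed (Icc (0:ℝ) r ∩ g ⁻¹' (Ici 0)) :=
          (hgcont.mono hIccIci).preimage_isClosed_of_isClosed isClosed_Icc isClosed_Ici
        have hsub : S ⊆ Icc (0:ℝ) r ∩ g ⁻¹' (Ici 0) := fun s hs => ⟨hs.1, hs.2.le⟩
        have := (hclosed.closure_subset_iff.mpr hsub) hcl
        exact this.2
      rcases eq_or_lt_of_le hs₀mem.1 with hz | hz
      · -- s₀ = 0 : contradiction with g < 0 near 0
        obtain ⟨δ, hδ, hδsub⟩ := mem_nhdsGT_iff_exists_Ioc_subset.mp hgneg_near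
        have hlt : sInf S < δ := by rw [← hs₀_def, ← hz]; exact hδ
        obtain ⟨s, hsS, hslt⟩ := exists_lt_of_csInf_lt hSne hlt
        have hs0 : 0 < s := by
          rcases eq_or_lt_of_le hsS.1.1 with h | h
          · exfalso; have h2 := hsS.2; rw [← h, hg0] at h2; exact lt_irrefl 0 h2
          · exact h
        exact absurd (hδsub ⟨hs0, hslt.le⟩) (not_lt.mpr hsS.2.le)
      · -- 0 < s₀ : the function e^t g(t) is strictly decreasing on [0,s₀]
        set u : ℝ → ℝ := fun t => Real.exp t * g t with hu_def
        have hucont : ContinuousOn u (Icc 0 s₀) :=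
          Real.continuous_exp.continuousOn.mul (hgcont.mono (fun t ht => ht.1))
        have huderiv : ∀ t ∈ Ioo (0:ℝ) s₀, HasDerivAt u (Real.exp t * g t + Real.exp t * gd t) t := by
          intro t ht
          exact (Real.hasDerivAt_exp t).mul (hgd' t ht.1)
        have hanti : StrictAntiOn u (Icc 0 s₀) := by
          apply strictAntiOn_of_deriv_neg (convex_Icc 0 s₀) hucont
          intro t ht
          rw [interior_Icc] at ht
          rw [(huderiv t ht).deriv]
          have hgt : g t ≤ 0 := hbefore t ht.1.le ht.2
          have hgdt : gd t = |g t| - f t := hodeg t ht.1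
          have hft : 0 < f t := Hpos t ⟨ht.1, le_trans ht.2.le hs₀mem.2⟩
          rw [hgdt, abs_of_nonpos hgt]
          have := Real.exp_pos t
          nlinarith
        have h1 : u s₀ < u 0 := hanti (left_mem_Icc.mpr hs₀mem.1) (right_mem_Icc.mpr hs₀mem.1) hz
        rw [hu_def] at h1
        simp only [hg0, mul_zero, Real.exp_zero, one_mul] at h1
        nlinarith [Real.exp_pos s₀]
    -- Step B : g < 0 on (0, r]
    have hgneg : ∀ s ∈ Ioc (0:ℝ) r, g s < 0 := by
      set u : ℝ → ℝ := fun t => Real.exp t * g t with hu_def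
      have hucont : ContinuousOn u (Icc 0 r) :=
        Real.continuous_exp.continuousOn.mul (hgcont.mono hIccIci)
      have hanti : StrictAntiOn u (Icc 0 r) := by
        apply strictAntiOn_of_deriv_neg (convex_Icc 0 r) hucont
        intro t ht
        rw [interior_Icc] at ht
        rw [(show HasDerivAt u (Real.exp t * g t + Real.exp t * gd t) t from (Real.hasDerivAt_exp t).mul (hgd' t ht.1)).deriv]
        have hgt : g t ≤ 0 := hnonpos t ⟨ht.1.le, ht.2.le⟩
        have hft : 0 < f t := Hpos t ⟨ht.1, ht.2.le⟩
        rw [hodeg t ht.1, abs_of_nonpos hgt]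
        have := Real.exp_pos t
        nlinarith
      intro s hs
      have h1 : u s < u 0 := hanti (left_mem_Icc.mpr hr.le) ⟨hs.1.le, hs.2⟩ hs.1
      rw [hu_def] at h1
      simp only [hg0, mul_zero, Real.exp_zero, one_mul] at h1
      nlinarith [Real.exp_pos s]
    -- fd < 0 on (0, r]
    have hfdneg : ∀ s ∈ Ioc (0:ℝ) r, fd s < 0 := by
      intro s hs
      by_contra h
      push_neg at h
      have : 0 ≤ g s := mul_nonneg (Real.rpow_nonneg (abs_nonneg _) _) h
      exact absurd this (not_le.mpr (hgneg s hs))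
    -- f < a on (0, r]
    have hflt : ∀ s ∈ Ioc (0:ℝ) r, f s < a := by
      have hanti : StrictAntiOn f (Icc 0 r) := by
        apply strictAntiOn_of_deriv_neg (convex_Icc 0 r) hfcr
        intro t ht
        rw [interior_Icc] at ht
        rw [(hfd' t ht.1).deriv]
        exact hfdneg t ⟨ht.1, ht.2.le⟩
      intro s hs
      have := hanti (left_mem_Icc.mpr hr.le) ⟨hs.1.le, hs.2⟩ hs.1
      rwa [hf0] at this
    -- the exponential lower bound for g
    have hgbd : ∀ s ∈ Ioc (0:ℝ) r, -(a * (1 - Real.exp (-s))) < g s := by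
      set w : ℝ → ℝ := fun t => Real.exp t * (g t + a) with hw_def
      have hwcont : ContinuousOn w (Icc 0 r) :=
        Real.continuous_exp.continuousOn.mul ((hgcont.mono hIccIci).add continuousOn_const)
      have hmono : StrictMonoOn w (Icc 0 r) := by
        apply strictMonoOn_of_deriv_pos (convex_Icc 0 r) hwcont
        intro t ht
        rw [interior_Icc] at ht
        have hd : HasDerivAt w (Real.exp t * (g t + a) + Real.exp t * gd t) t := by
          have := (Real.hasDerivAt_exp t).mul ((hgd' t ht.1).add_const a)
          exact this
        rw [hd.deriv]
        have hgt : g t ≤ 0 := hnonpos t ⟨ht.1.le, ht.2.le⟩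
        have hft : f t < a := hflt t ⟨ht.1, ht.2.le⟩
        rw [hodeg t ht.1, abs_of_nonpos hgt]
        have := Real.exp_pos t
        nlinarith
      intro s hs
      have h1 : w 0 < w s := hmono (left_mem_Icc.mpr hr.le) ⟨hs.1.le, hs.2⟩ hs.1
      rw [hw_def] at h1
      simp only [hg0, zero_add, Real.exp_zero, one_mul] at h1
      have hexp : Real.exp (-s) * Real.exp s = 1 := by
        rw [← Real.exp_add]; simp
      nlinarith [Real.exp_pos s, Real.exp_pos (-s)]
    exact fun s hs => ⟨Hpos s hs, hflt s hs, hgneg s hs, hgbd s hs⟩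
  -- a neighbourhood of 0 where f is positive
  obtain ⟨ε, hε, hεsub⟩ : ∃ ε, 0 < ε ∧ Icc (0:ℝ) ε ⊆ {s | 0 < f s} := by
    have hc : Tendsto f (𝓝[Ici 0] (0:ℝ)) (𝓝 a) := by
      have := hfcont 0 self_mem_Ici
      rwa [ContinuousWithinAt, hf0] at this
    have hmem : {s | 0 < f s} ∈ 𝓝[Ici 0] (0:ℝ) := hc (isOpen_Ioi.mem_nhds ha)
    obtain ⟨u, hu, husub⟩ := mem_nhdsGE_iff_exists_Icc_subset.mp hmem
    exact ⟨u, hu, husub⟩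
  -- extTime f > 0
  have hpos_ext : (ε : EReal) ≤ extTime f := by
    apply le_sInf
    rintro x ⟨s, hs, hfs, rfl⟩
    have : ε < s := by
      by_contra h
      push_neg at h
      have := hεsub ⟨hs.le, h⟩
      rw [mem_setOf_eq, hfs] at this
      exact lt_irrefl 0 this
    exact_mod_cast this.le
  refine ⟨lt_of_lt_of_le (by exact_mod_cast hε) hpos_ext, ?_⟩
  intro r hr hrlt
  have Hne : ∀ s ∈ Ioc (0:ℝ) r, f s ≠ 0 := by
    intro s hs hfs
    have h1 : extTime f ≤ (s : EReal) := sInf_le ⟨s, hs.1, hfs, rfl⟩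
    have h2 : (s : EReal) ≤ (r : EReal) := by exact_mod_cast hs.2
    exact absurd (lt_of_le_of_lt (h1.trans h2) hrlt) (lt_irrefl _)
  obtain ⟨hfpos, hflt, hgneg, hgbd⟩ := key r hr Hne r (right_mem_Ioc.mpr hr)
  have hfdneg : fd r < 0 := by
    by_contra h
    push_neg at h
    have : 0 ≤ g r := mul_nonneg (Real.rpow_nonneg (abs_nonneg _) _) h
    exact absurd this (not_le.mpr hgneg)
  refine ⟨hfpos, hflt, ?_, hfdneg⟩
  -- convert the bound on g to a bound on fd
  have hgr : g r = -(|fd r| ^ (p-1)) := neg_abs_pow_of_neg hfdneg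
  have hlt : |fd r| ^ (p-1) < a * (1 - Real.exp (-r)) := by
    rw [hgr] at hgbd; linarith
  have hp1' : (0:ℝ) < p - 1 := by linarith
  have hkey : |fd r| < (a * (1 - Real.exp (-r))) ^ (1/(p-1)) := by
    have := Real.rpow_lt_rpow (Real.rpow_nonneg (abs_nonneg _) _) hlt
      (by positivity : (0:ℝ) < 1/(p-1))
    rwa [← Real.rpow_mul (abs_nonneg _), mul_one_div_cancel (ne_of_gt hp1'),
      Real.rpow_one] at this
  have : fd r = -|fd r| := by rw [abs_of_neg hfdneg]; ring
  rw [this]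
  linarith
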